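/- arXiv:2605.09519 — 8 statements merged into one kernel-verified Lean document; each statement's English description precedes it below -/
import Mathlib

section
/- Let Π be a ground logic program (a finite set of rules A ← B ∧ N where A is a disjunction of atoms, B a conjunction of atoms, and N a negative formula). If Π' is a subset of Π, I is a stable model of Π' (i.e., I is a minimal model of the reduct (Π')^I), and I classically satisfies every rule of Π, then I is a stable model of Π. -/
open Finset Filter Real
open scoped Classical

/-- A ground rule `A ← B ∧ N`: `head` is the disjunction of atoms `A`,
`body` the conjunction of atoms `B`, and `neg` gives the satisfaction
relation of the negative formula `N`. -/
structure GRule (σ : Type) where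
  head : Finset σ
  body : Finset σ
  neg : Finset σ → Prop

namespace GRule
variable {σ : Type}

/-- `I` classically satisfies the rule `B ∧ N → A`. -/
def sat (r : GRule σ) (I : Finset σ) : Prop :=
  r.body ⊆ I → r.neg I → ∃ a ∈ r.head, a ∈ I

/-- `J` satisfies the reduct `Γ^I` of the program `Γ` relative to `I`. -/
def satReduct (Γ : Set (GRule σ)) (I J : Finset σ) : Prop :=
  ∀ r ∈ Γ, r.neg I → r.body ⊆ J → ∃ a ∈ r.head, a ∈ J

/-- `I` is a stable model of `Γ`: a minimal model of the reduct `Γ^I`. -/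
def stable (Γ : Set (GRule σ)) (I : Finset σ) : Prop :=
  satReduct Γ I I ∧ ∀ J, J ⊂ I → ¬ satReduct Γ I J

/-- Indexed version of reduct satisfaction (a program given by an index set of rules). -/
def satReductIdx {ι : Type} (rule : ι → GRule σ) (S : Set ι) (I J : Finset σ) : Prop :=
  ∀ i ∈ S, (rule i).neg I → (rule i).body ⊆ J → ∃ a ∈ (rule i).head, a ∈ J

/-- Indexed version of stable models. -/
def stableIdx {ι : Type} (rule : ι → GRule σ) (S : Set ι) (I : Finset σ) : Prop :=
  satReductIdx rule S I I ∧ ∀ J, J ⊂ I → ¬ satReductIdx rule S I J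

end GRule

/-- Proposition 1: if Π' ⊆ Π, I is a stable model of Π', and I satisfies every rule of Π,
then I is a stable model of Π. -/
theorem stmt0 {σ : Type} (Pg Pg' : Set (GRule σ)) (hfin : Pg.Finite)
    (I : Finset σ) (hsub : Pg' ⊆ Pg)
    (hst : GRule.stable Pg' I) (hsat : ∀ r ∈ Pg, r.sat I) :
    GRule.stable Pg I := by
  constructor
  · intro r hr hneg hbody
    exact hsat r hr hbody hneg
  · intro J hJ hred
    exact hst.2 J hJ (fun r hr => hred r (hsub hr))
end

section
/- Let Π be a finite ground logic program with n rules, all given hard weight α, and suppose Π has at least one stable model. Then in the limit α → ∞, the normalized weight P(I) = lim_{α→∞} W(I)/Σ_J W(J) (where W(I) = exp(α·|Π_I|) if I is a stable model of Π_I and 0 otherwise, summing over J in SM[Π with weights]) equals 1/k for every stable model I of Π, where k is the number of stable models of Π, and equals 0 for every other interpretation. -/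
open Finset Filter Real
open scoped Classical

/-- Unnormalized weight of `I` when all rules are hard with weight `α`. -/
noncomputable def Whard {σ ι : Type} [Fintype ι] (rule : ι → GRule σ) (α : ℝ)
    (I : Finset σ) : ℝ :=
  Set.indicator {J | GRule.stableIdx rule {i | (rule i).sat J} J}
    (fun J => Real.exp (α * ((Finset.univ.filter (fun i => (rule i).sat J)).card : ℝ))) I

section aux
variable {σ ι : Type} [Fintype σ] [DecidableEq σ] [Fintype ι] (rule : ι → GRule σ)

private lemma stable_univ_iff (J : Finset σ) :
    GRule.stableIdx rule Set.univ J ↔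
      (GRule.stableIdx rule {i | (rule i).sat J} J ∧ ∀ i, (rule i).sat J) := by
  constructor
  · intro hst
    have hall : ∀ i, (rule i).sat J := fun i hb hn => hst.1 i trivial hn hb
    have hset : {i | (rule i).sat J} = Set.univ := Set.eq_univ_of_forall hall
    rw [hset]; exact ⟨hst, hall⟩
  · rintro ⟨h1, h2⟩
    have hset : {i | (rule i).sat J} = Set.univ := Set.eq_univ_of_forall h2
    rwa [hset] at h1

private lemma tendsto_f (J : Finset σ) :
    Tendsto (fun α : ℝ => Whard rule α J * Real.exp (-(α * (Fintype.card ι : ℝ)))) atTop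
      (nhds (if GRule.stableIdx rule Set.univ J then 1 else 0)) := by
  by_cases hJ : GRule.stableIdx rule {i | (rule i).sat J} J
  · by_cases hall : ∀ i, (rule i).sat J
    · have hst : GRule.stableIdx rule Set.univ J := (stable_univ_iff rule J).2 ⟨hJ, hall⟩
      have hc : (Finset.univ.filter (fun i => (rule i).sat J)) = Finset.univ :=
        Finset.filter_true_of_mem (fun i _ => hall i)
      have hmem : J ∈ {J | GRule.stableIdx rule {i | (rule i).sat J} J} := hJ
      simp only [Whard, Set.indicator_of_mem hmem, hst, if_true, hc, Finset.card_univ]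
      have : ∀ α : ℝ, Real.exp (α * (Fintype.card ι : ℝ)) *
          Real.exp (-(α * (Fintype.card ι : ℝ))) = 1 := by
        intro α; rw [← Real.exp_add]; simp
      simpa [this] using tendsto_const_nhds (x := (1:ℝ)) (f := atTop)
    · have hst : ¬ GRule.stableIdx rule Set.univ J := by
        intro hst; exact hall ((stable_univ_iff rule J).1 hst).2
      have hlt : ((Finset.univ.filter (fun i => (rule i).sat J)).card : ℝ)
          < (Fintype.card ι : ℝ) := by
        have : (Finset.univ.filter (fun i => (rule i).sat J)) ⊂ Finset.univ := by
          refine Finset.ssubset_univ_iff.2 ?_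
          intro he
          apply hall
          intro i
          have hi : i ∈ Finset.univ.filter (fun i => (rule i).sat J) := by
            rw [he]; exact Finset.mem_univ i
          exact (Finset.mem_filter.1 hi).2
        have h2 := Finset.card_lt_card this
        rw [Finset.card_univ] at h2
        exact_mod_cast h2
      have hmem : J ∈ {J | GRule.stableIdx rule {i | (rule i).sat J} J} := hJ
      simp only [Whard, Set.indicator_of_mem hmem, hst, if_false]
      have heq : ∀ α : ℝ, Real.exp (α * ((Finset.univ.filter (fun i => (rule i).sat J)).card : ℝ)) *
          Real.exp (-(α * (Fintype.card ι : ℝ)))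
          = Real.exp (α * (((Finset.univ.filter (fun i => (rule i).sat J)).card : ℝ)
            - (Fintype.card ι : ℝ))) := by
        intro α; rw [← Real.exp_add]; ring_nf
      have hneg : (((Finset.univ.filter (fun i => (rule i).sat J)).card : ℝ)
          - (Fintype.card ι : ℝ)) < 0 := by linarith
      have hb : Tendsto (fun α : ℝ => α * (((Finset.univ.filter (fun i => (rule i).sat J)).card : ℝ)
          - (Fintype.card ι : ℝ))) atTop atBot := by
        exact Tendsto.atTop_mul_const_of_neg hneg tendsto_id
      have hcomp := Real.tendsto_exp_atBot.comp hb
      simpa [Function.comp_def, heq] using hcomp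
  · have hst : ¬ GRule.stableIdx rule Set.univ J := by
      intro hst; exact hJ ((stable_univ_iff rule J).1 hst).1
    have hmem : J ∉ {J | GRule.stableIdx rule {i | (rule i).sat J} J} := hJ
    simp only [Whard, Set.indicator_of_notMem hmem, hst, if_false, zero_mul]
    exact tendsto_const_nhds

end aux

/-- Theorem 1 (second half): if Π has a stable model, the limiting normalized weight of
each stable model of Π is 1/k (k = number of stable models of Π) and every other
interpretation has limiting normalized weight 0. -/
theorem stmt5 {σ ι : Type} [Fintype σ] [DecidableEq σ] [Fintype ι]
    (rule : ι → GRule σ)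
    (h : ∃ I : Finset σ, GRule.stableIdx rule Set.univ I) (I : Finset σ) :
    Tendsto (fun α : ℝ => Whard rule α I / ∑ J : Finset σ, Whard rule α J) atTop
      (nhds (if GRule.stableIdx rule Set.univ I
        then 1 / (Nat.card {J : Finset σ // GRule.stableIdx rule Set.univ J} : ℝ)
        else 0)) := by
  set k : ℝ := (Nat.card {J : Finset σ // GRule.stableIdx rule Set.univ J} : ℝ) with hk
  have hkpos : (0:ℝ) < k := by
    obtain ⟨I0, hI0⟩ := h
    have : Nonempty {J : Finset σ // GRule.stableIdx rule Set.univ J} := ⟨⟨I0, hI0⟩⟩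
    rw [hk]
    exact_mod_cast Nat.card_pos
  have hsumval : (∑ J : Finset σ,
      (if GRule.stableIdx rule Set.univ J then (1:ℝ) else 0)) = k := by
    rw [Finset.sum_boole, hk, Nat.card_eq_fintype_card, Fintype.card_subtype]
  have hsum : Tendsto (fun α : ℝ => ∑ J : Finset σ,
      Whard rule α J * Real.exp (-(α * (Fintype.card ι : ℝ)))) atTop (nhds k) := by
    rw [← hsumval]
    exact tendsto_finset_sum _ (fun J _ => tendsto_f rule J)
  have hdiv := (tendsto_f rule I).div hsum (ne_of_gt hkpos)
  have hcongr : ∀ α : ℝ,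
      Whard rule α I * Real.exp (-(α * (Fintype.card ι : ℝ))) /
        (∑ J : Finset σ, Whard rule α J * Real.exp (-(α * (Fintype.card ι : ℝ))))
      = Whard rule α I / ∑ J : Finset σ, Whard rule α J := by
    intro α
    rw [← Finset.sum_mul,
      mul_div_mul_right _ _ (Real.exp_ne_zero _)]
  have := hdiv.congr hcongr
  convert this using 2
  split_ifs <;> simp
end

section
/- Let ⟨Π, CONSTR⟩ be a logic program with weak constraints such that Π has a stable model, and let Π' be its LP^MLN translation (hard weight α on rules of Π, weight −Weight(C) on ⊥ ← Body(C) for each weak constraint C). Then I is a stable model of Π (ignoring weak constraints) if and only if I ∈ SM'[Π']. -/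
open Finset Filter Real
open scoped Classical

section WeakConstraints
variable {σ κ : Type} [Fintype σ] [DecidableEq σ] [Fintype κ]

/-- Satisfaction of the body of weak constraint `C` (positive atoms `pos C`,
negative part `negc C`). -/
def bodySat (pos : κ → Finset σ) (negc : κ → Finset σ → Prop) (C : κ) (I : Finset σ) : Prop :=
  pos C ⊆ I ∧ negc C I

/-- Penalty of an interpretation: sum of weights of weak constraints whose body it satisfies. -/
noncomputable def Penalty (pos : κ → Finset σ) (negc : κ → Finset σ → Prop)
    (Weight : κ → ℕ) (I : Finset σ) : ℕ :=
  ∑ C ∈ Finset.univ.filter (fun C => bodySat pos negc C I), Weight C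

/-- The LP^MLN soft rule `⊥ ← Body(C)` obtained from weak constraint `C`. -/
def conRule (pos : κ → Finset σ) (negc : κ → Finset σ → Prop) (C : κ) : GRule σ :=
  ⟨∅, pos C, negc C⟩

/-- The rules of the translated program Π' that are satisfied by `I`
(assuming `I` satisfies all hard rules, these are all of Π plus the satisfied constraints). -/
def transSat (Pg : Set (GRule σ)) (pos : κ → Finset σ) (negc : κ → Finset σ → Prop)
    (I : Finset σ) : Set (GRule σ) :=
  {r | r ∈ Pg ∧ r.sat I} ∪ {r | ∃ C, r = conRule pos negc C ∧ (conRule pos negc C).sat I}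

/-- `SM'[Π']` for the translation of a program with weak constraints. -/
def SMweak (Pg : Set (GRule σ)) (pos : κ → Finset σ) (negc : κ → Finset σ → Prop)
    (I : Finset σ) : Prop :=
  (∀ r ∈ Pg, r.sat I) ∧ GRule.stable (transSat Pg pos negc I) I

/-- `W'` of the translated program: exp of the sum of the weights `−Weight C` of the
satisfied soft rules, on `SM'`, and `0` elsewhere. -/
noncomputable def Wweak (Pg : Set (GRule σ)) (pos : κ → Finset σ) (negc : κ → Finset σ → Prop)
    (Weight : κ → ℕ) (I : Finset σ) : ℝ :=
  Set.indicator {J | SMweak Pg pos negc J}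
    (fun J => Real.exp
      (∑ C ∈ Finset.univ.filter (fun C => (conRule pos negc C).sat J), -(Weight C : ℝ))) I

/-- Normalized weight `P'` of the translated program. -/
noncomputable def Pweak (Pg : Set (GRule σ)) (pos : κ → Finset σ) (negc : κ → Finset σ → Prop)
    (Weight : κ → ℕ) (I : Finset σ) : ℝ :=
  Wweak Pg pos negc Weight I / ∑ J : Finset σ, Wweak Pg pos negc Weight J

end WeakConstraints

/-- Lemma: for a program with weak constraints such that Π has a stable model,
I is a stable model of Π iff I ∈ SM'[Π'] for the LP^MLN translation Π'. -/
theorem stmt7 {σ κ : Type} [Fintype σ] [DecidableEq σ] [Fintype κ]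
    (Pg : Set (GRule σ)) (pos : κ → Finset σ) (negc : κ → Finset σ → Prop)
    (Weight : κ → ℕ) (hW : ∀ C, 0 < Weight C)
    (h : ∃ I : Finset σ, GRule.stable Pg I) (I : Finset σ) :
    GRule.stable Pg I ↔ SMweak Pg pos negc I := by
  constructor
  · rintro ⟨hIr, hmin⟩
    have hsat : ∀ r ∈ Pg, r.sat I := fun r hr hb hn => hIr r hr hn hb
    refine ⟨hsat, ?_, ?_⟩
    · rintro r (⟨hrP, hrS⟩ | ⟨C, rfl, hCS⟩) hn hb
      · exact hIr r hrP hn hb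
      · exact absurd (hCS hb hn) (by simp [conRule])
    · intro J hJ hred
      refine hmin J hJ (fun r hr hn hb => ?_)
      exact hred r (Or.inl ⟨hr, fun hb' hn' => hIr r hr hn' hb'⟩) hn hb
  · rintro ⟨hsat, hIr, hmin⟩
    refine ⟨fun r hr hn hb => hsat r hr hb hn, fun J hJ hred => ?_⟩
    refine hmin J hJ ?_
    rintro r (⟨hrP, _⟩ | ⟨C, rfl, hCS⟩) hn hb
    · exact hred r hrP hn hb
    · exact absurd (hCS (hb.trans hJ.subset) hn) (by simp [conRule])
end

section
/- Let Π be a ground LP^MLN program over a finite signature σ and let I be an interpretation. Then I satisfies the loop formulas of the unweighted program Π̄ (underlying all rules of Π) for every nonempty subset of atoms if and only if I satisfies the loop formulas of the unweighted program Π̄_I (consisting of the rules of Π satisfied by I) for every nonempty subset of atoms. -/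
open Finset Filter Real
open scoped Classical

section Loops
variable {σ : Type}

/-- External support formula `ES_Γ(L)`: some rule `A ← B ∧ N` of Γ with `A ∩ L ≠ ∅`,
`B ∩ L = ∅`, whose body `B ∧ N` holds in `I` and with all atoms of `A ∖ L` false in `I`. -/
def ES (Γ : Set (GRule σ)) (L : Finset σ) (I : Finset σ) : Prop :=
  ∃ r ∈ Γ, (∃ a ∈ r.head, a ∈ L) ∧ (∀ b ∈ r.body, b ∉ L) ∧
    r.body ⊆ I ∧ r.neg I ∧ ∀ b ∈ r.head, b ∉ L → b ∉ I

/-- Loop formula `LF_Γ(L) = L^∧ → ES_Γ(L)`. -/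
def LF (Γ : Set (GRule σ)) (L : Finset σ) (I : Finset σ) : Prop :=
  L ⊆ I → ES Γ L I

end Loops

/-- Lemma 1: I satisfies all loop formulas of Π̄ iff I satisfies all loop formulas of
Π̄_I, the set of rules of Π satisfied by I. -/
theorem stmt9 {σ : Type} [Fintype σ] (Pg : Set (GRule σ)) (I : Finset σ) :
    (∀ L : Finset σ, L.Nonempty → LF Pg L I) ↔
      (∀ L : Finset σ, L.Nonempty → LF {r | r ∈ Pg ∧ r.sat I} L I) := by
  constructor
  · intro h L hL hLI
    obtain ⟨r, hr, ⟨a, ha, haL⟩, hb, hbI, hneg, hh⟩ := h L hL hLI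
    exact ⟨r, ⟨hr, fun _ _ => ⟨a, ha, hLI haL⟩⟩, ⟨a, ha, haL⟩, hb, hbI, hneg, hh⟩
  · intro h L hL hLI
    obtain ⟨r, hr, h2⟩ := h L hL hLI
    exact ⟨r, hr.1, h2⟩
end

section
/- Let L be a finite set of weighted propositional formulas over a finite signature, partitioned into hard formulas L^hard (weight symbol α) and soft formulas (real weights), such that the set of hard formulas (with weights dropped) is classically satisfiable. Define W_α(I) = exp(α·|{F ∈ L^hard : I ⊨ F}| + Σ_{soft w:F, I ⊨ F} w) and P(I) = lim_{α→∞} W_α(I)/Σ_J W_α(J). Then: (1) if I satisfies all hard formulas, P(I) = exp(Σ_{soft w:F, I⊨F} w) / Σ_{J ⊨ L^hard} exp(Σ_{soft w:F, J⊨F} w); (2) if I violates some hard formula, P(I) = 0. -/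
open Finset Filter Real
open scoped Classical

/-- MLN weight with hard-weight parameter α: formulas in `hard` count α each, soft
formulas (the complement) contribute their real weights. -/
noncomputable def Wmln {σ ι : Type} [Fintype σ] [DecidableEq σ] [Fintype ι]
    (F : ι → Finset σ → Prop) (hard : Finset ι) (w : ι → ℝ) (α : ℝ) (I : Finset σ) : ℝ :=
  Real.exp (α * ((hard.filter (fun i => F i I)).card : ℝ) +
    ∑ i ∈ hardᶜ.filter (fun i => F i I), w i)

private lemma tendsto_exp_mul_neg {r : ℝ} (hr : r < 0) :
    Tendsto (fun α : ℝ => Real.exp (α * r)) atTop (nhds 0) := by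
  have h : Tendsto (fun α : ℝ => α * r) atTop atBot :=
    Tendsto.atTop_mul_const_of_neg hr tendsto_id
  exact Real.tendsto_exp_atBot.comp h

/-- Lemma (MLN with satisfiable hard formulas): in the limit α → ∞, an interpretation
satisfying all hard formulas gets probability proportional to the exp of its soft weight,
normalized over interpretations satisfying the hard part; any other interpretation gets
probability 0. -/
theorem stmt12 {σ ι : Type} [Fintype σ] [DecidableEq σ] [Fintype ι]
    (F : ι → Finset σ → Prop) (hard : Finset ι) (w : ι → ℝ)
    (hsat : ∃ I : Finset σ, ∀ i ∈ hard, F i I) (I : Finset σ) :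
    ((∀ i ∈ hard, F i I) →
      Tendsto (fun α : ℝ => Wmln F hard w α I / ∑ J : Finset σ, Wmln F hard w α J) atTop
        (nhds (Real.exp (∑ i ∈ hardᶜ.filter (fun i => F i I), w i) /
          ∑ J ∈ Finset.univ.filter (fun J : Finset σ => ∀ i ∈ hard, F i J),
            Real.exp (∑ i ∈ hardᶜ.filter (fun i => F i J), w i)))) ∧
    ((∃ i ∈ hard, ¬ F i I) →
      Tendsto (fun α : ℝ => Wmln F hard w α I / ∑ J : Finset σ, Wmln F hard w α J) atTop
        (nhds 0)) := by
  set H : ℝ := (hard.card : ℝ) with hH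
  set c : Finset σ → ℝ := fun J => ((hard.filter (fun i => F i J)).card : ℝ) with hc
  set s : Finset σ → ℝ := fun J => ∑ i ∈ hardᶜ.filter (fun i => F i J), w i with hs
  have key : ∀ J : Finset σ,
      Tendsto (fun α : ℝ => Real.exp (α * (c J - H) + s J)) atTop
        (nhds (if (∀ i ∈ hard, F i J) then Real.exp (s J) else 0)) := by
    intro J
    by_cases h : ∀ i ∈ hard, F i J
    · have hfe : hard.filter (fun i => F i J) = hard := Finset.filter_eq_self.2 h
      have hcH : c J = H := by simp [hc, hfe, hH]
      rw [if_pos h]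
      have heq : (fun α : ℝ => Real.exp (α * (c J - H) + s J)) = fun _ => Real.exp (s J) := by
        funext α; rw [hcH]; ring_nf
      rw [heq]; exact tendsto_const_nhds
    · have hne : hard.filter (fun i => F i J) ≠ hard := by
        intro he
        exact h (Finset.filter_eq_self.1 he)
      have hlt : (hard.filter (fun i => F i J)).card < hard.card :=
        Finset.card_lt_card (lt_of_le_of_ne (Finset.filter_subset _ _) hne)
      have hr : c J - H < 0 := by
        have : c J < H := by simp only [hc, hH]; exact_mod_cast hlt
        linarith
      have := (tendsto_exp_mul_neg hr).mul_const (Real.exp (s J))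
      simp only [zero_mul] at this
      simp only [h, if_false]
      refine this.congr (fun α => ?_)
      rw [← Real.exp_add]
  have hW : ∀ (α : ℝ) (J : Finset σ),
      Wmln F hard w α J = Real.exp (α * (c J - H) + s J) * Real.exp (α * H) := by
    intro α J
    rw [Wmln, ← Real.exp_add]
    ring_nf
    rfl
  set D : ℝ := ∑ J ∈ Finset.univ.filter (fun J : Finset σ => ∀ i ∈ hard, F i J),
      Real.exp (s J) with hD
  have hDpos : 0 < D := by
    obtain ⟨J0, hJ0⟩ := hsat
    refine Finset.sum_pos (fun J _ => Real.exp_pos _) ⟨J0, ?_⟩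
    exact Finset.mem_filter.2 ⟨Finset.mem_univ _, hJ0⟩
  have hden : Tendsto (fun α : ℝ => ∑ J : Finset σ, Real.exp (α * (c J - H) + s J))
      atTop (nhds D) := by
    have := tendsto_finset_sum Finset.univ (fun J _ => key J)
    rw [hD, Finset.sum_filter]
    exact this
  have hratio : ∀ α : ℝ,
      Wmln F hard w α I / ∑ J : Finset σ, Wmln F hard w α J =
      Real.exp (α * (c I - H) + s I) / ∑ J : Finset σ, Real.exp (α * (c J - H) + s J) := by
    intro α
    simp only [hW]
    rw [← Finset.sum_mul, mul_div_mul_right _ _ (Real.exp_ne_zero _)]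
  constructor
  · intro hI
    have hnum := key I
    rw [if_pos hI] at hnum
    have := hnum.div hden (ne_of_gt hDpos)
    exact this.congr (fun α => (hratio α).symm)
  · intro hI
    have hnI : ¬ ∀ i ∈ hard, F i I := by
      obtain ⟨i, hi, hni⟩ := hI
      exact fun h => hni (h i hi)
    have hnum := key I
    rw [if_neg hnI] at hnum
    have := hnum.div hden (ne_of_gt hDpos)
    rw [zero_div] at this
    exact this.congr (fun α => (hratio α).symm)
end

section
/- Let Π be an LP^MLN program over a finite signature with SM'[Π] nonempty, where each rule has weight α (hard) or a real weight (soft). For every interpretation I, the limit P_Π(I) = lim_{α→∞} W_Π(I)/Σ_{J ∈ SM[Π]} W_Π(J) exists and equals P'_Π(I) = W'_Π(I)/Σ_{J ∈ SM'[Π]} W'_Π(J), where W_Π(I) = exp(α·h_I + s_I) if I ∈ SM[Π] and 0 otherwise (h_I the number of hard rules satisfied by I, s_I the sum of soft weights of soft rules satisfied by I), SM[Π] = {I : I is a stable model of the rules of Π satisfied by I}, W'_Π(I) = exp(s_I) if I ∈ SM'[Π] and 0 otherwise, and SM'[Π] = {I ∈ SM[Π] : I satisfies all hard rules}. -/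
open Finset Filter Real
open scoped Classical

section LPMLN
variable {σ ι : Type} [Fintype σ] [DecidableEq σ] [Fintype ι]

/-- `SM[Π]`: stable models of the set of rules of Π they satisfy. -/
def SMall (rule : ι → GRule σ) : Set (Finset σ) :=
  {I | GRule.stableIdx rule {i | (rule i).sat I} I}

/-- `SM'[Π]`: members of `SM[Π]` satisfying all hard rules. -/
def SMprime (rule : ι → GRule σ) (soft : Finset ι) : Set (Finset σ) :=
  {I | I ∈ SMall rule ∧ ∀ i ∉ soft, (rule i).sat I}

/-- Number of hard rules satisfied by `I`. -/
noncomputable def hcount (rule : ι → GRule σ) (soft : Finset ι) (I : Finset σ) : ℕ :=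
  (softᶜ.filter (fun i => (rule i).sat I)).card

/-- Sum of the soft weights of the soft rules satisfied by `I`. -/
noncomputable def scount (rule : ι → GRule σ) (soft : Finset ι) (w : ι → ℝ)
    (I : Finset σ) : ℝ :=
  ∑ i ∈ soft.filter (fun i => (rule i).sat I), w i

/-- `W_Π(I)` with hard weight parameter α. -/
noncomputable def Wfull (rule : ι → GRule σ) (soft : Finset ι) (w : ι → ℝ) (α : ℝ)
    (I : Finset σ) : ℝ :=
  Set.indicator (SMall rule)
    (fun J => Real.exp (α * (hcount rule soft J : ℝ) + scount rule soft w J)) I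

/-- `W'_Π(I)`. -/
noncomputable def Wprime (rule : ι → GRule σ) (soft : Finset ι) (w : ι → ℝ)
    (I : Finset σ) : ℝ :=
  Set.indicator (SMprime rule soft) (fun J => Real.exp (scount rule soft w J)) I

end LPMLN

/-- Proposition 2: if `SM'[Π]` is nonempty then for every interpretation `I`, the limit
as α → ∞ of the normalized weight `P_Π(I)` exists and equals `P'_Π(I)`. -/
theorem stmt13 {σ ι : Type} [Fintype σ] [DecidableEq σ] [Fintype ι]
    (rule : ι → GRule σ) (soft : Finset ι) (w : ι → ℝ)
    (hne : (SMprime rule soft).Nonempty) (I : Finset σ) :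
    Tendsto
      (fun α : ℝ => Wfull rule soft w α I / ∑ J : Finset σ, Wfull rule soft w α J) atTop
      (nhds (Wprime rule soft w I / ∑ J : Finset σ, Wprime rule soft w J)) := by
  classical
  set Hc : ℝ := ((softᶜ : Finset ι).card : ℝ) with hHc
  have key : ∀ J : Finset σ,
      Tendsto (fun α : ℝ => Wfull rule soft w α J * Real.exp (-(α * Hc))) atTop
        (nhds (Wprime rule soft w J)) := by
    intro J
    by_cases hJ : J ∈ SMall rule
    · by_cases hJ' : J ∈ SMprime rule soft
      · have hh : hcount rule soft J = (softᶜ : Finset ι).card := by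
          unfold hcount
          congr 1
          exact Finset.filter_true_of_mem
            (fun i hi => hJ'.2 i (Finset.mem_compl.mp hi))
        have hfun : (fun α : ℝ => Wfull rule soft w α J * Real.exp (-(α * Hc)))
            = fun _ : ℝ => Real.exp (scount rule soft w J) := by
          funext α
          rw [Wfull, Set.indicator_of_mem hJ, hh, ← Real.exp_add]
          simp only [hHc]
          ring
        rw [hfun, Wprime, Set.indicator_of_mem hJ']
        exact tendsto_const_nhds
      · -- hcount < card
        obtain ⟨i, hi, hsat⟩ : ∃ i, i ∉ soft ∧ ¬ (rule i).sat J := by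
          by_contra h
          push_neg at h
          exact hJ' ⟨hJ, h⟩
        have hlt : (hcount rule soft J : ℝ) < Hc := by
          have : (softᶜ : Finset ι).filter (fun i => (rule i).sat J) ⊂ softᶜ := by
            refine Finset.ssubset_iff_of_subset (Finset.filter_subset _ _) |>.mpr ?_
            exact ⟨i, Finset.mem_compl.mpr hi, by simp [hsat]⟩
          have h2 := Finset.card_lt_card this
          rw [hHc, hcount]
          exact_mod_cast h2
        have hfun : (fun α : ℝ => Wfull rule soft w α J * Real.exp (-(α * Hc)))
            = fun α : ℝ => Real.exp (α * ((hcount rule soft J : ℝ) - Hc)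
                + scount rule soft w J) := by
          funext α
          rw [Wfull, Set.indicator_of_mem hJ, ← Real.exp_add]
          congr 1
          ring
        rw [hfun, Wprime, Set.indicator_of_notMem hJ']
        have hneg : (hcount rule soft J : ℝ) - Hc < 0 := by linarith
        have h1 : Tendsto (fun α : ℝ => α * ((hcount rule soft J : ℝ) - Hc)
            + scount rule soft w J) atTop atBot := by
          apply tendsto_atBot_add_const_right
          exact Tendsto.atTop_mul_const_of_neg hneg tendsto_id
        exact Real.tendsto_exp_atBot.comp h1
    · have hJ' : J ∉ SMprime rule soft := fun h => hJ h.1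
      have hfun : (fun α : ℝ => Wfull rule soft w α J * Real.exp (-(α * Hc)))
          = fun _ : ℝ => (0 : ℝ) := by
        funext α
        rw [Wfull, Set.indicator_of_notMem hJ, zero_mul]
      rw [hfun, Wprime, Set.indicator_of_notMem hJ']
      exact tendsto_const_nhds
  have hden : Tendsto
      (fun α : ℝ => (∑ J : Finset σ, Wfull rule soft w α J) * Real.exp (-(α * Hc)))
      atTop (nhds (∑ J : Finset σ, Wprime rule soft w J)) := by
    have : (fun α : ℝ => (∑ J : Finset σ, Wfull rule soft w α J) * Real.exp (-(α * Hc)))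
        = fun α : ℝ => ∑ J : Finset σ, Wfull rule soft w α J * Real.exp (-(α * Hc)) := by
      funext α; rw [Finset.sum_mul]
    rw [this]
    exact tendsto_finset_sum _ (fun J _ => key J)
  have hpos : 0 < ∑ J : Finset σ, Wprime rule soft w J := by
    obtain ⟨J0, hJ0⟩ := hne
    have h1 : Wprime rule soft w J0 ≤ ∑ J : Finset σ, Wprime rule soft w J := by
      apply Finset.single_le_sum (f := fun J => Wprime rule soft w J)
      · intro J _
        exact Set.indicator_nonneg (fun _ _ => (Real.exp_pos _).le) _
      · exact Finset.mem_univ _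
    have h2 : 0 < Wprime rule soft w J0 := by
      rw [Wprime, Set.indicator_of_mem hJ0]; exact Real.exp_pos _
    linarith
  have heq : (fun α : ℝ => Wfull rule soft w α I / ∑ J : Finset σ, Wfull rule soft w α J)
      = fun α : ℝ => (Wfull rule soft w α I * Real.exp (-(α * Hc)))
          / ((∑ J : Finset σ, Wfull rule soft w α J) * Real.exp (-(α * Hc))) := by
    funext α
    rw [mul_div_mul_right _ _ (Real.exp_ne_zero _)]
  rw [heq]
  exact Tendsto.div (key I) hden (ne_of_gt hpos)
end

section
/- Let Γ be a ground logic program over a finite signature and I an interpretation that satisfies Γ. Then I is a stable model of Γ if and only if for every nonempty subset L of the atoms, I satisfies the loop formula L^∧ → ES_Γ(L). -/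
open Finset Filter Real
open scoped Classical

/-- Loop-formula theorem (Lin–Zhao / Ferraris–Lee–Lifschitz, finite ground case):
for an interpretation satisfying Γ, I is a stable model of Γ iff I satisfies the
loop formula of every nonempty set of atoms. -/
theorem stmt17 {σ : Type} [Fintype σ] (Γ : Set (GRule σ)) (I : Finset σ)
    (hsat : ∀ r ∈ Γ, r.sat I) :
    GRule.stable Γ I ↔ ∀ L : Finset σ, L.Nonempty → LF Γ L I := by
  constructor
  · rintro ⟨hred, hmin⟩ L hLne hLI
    have hJ : I \ L ⊂ I := by
      obtain ⟨a, ha⟩ := hLne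
      refine Finset.ssubset_iff_of_subset (Finset.sdiff_subset) |>.mpr ?_
      exact ⟨a, hLI ha, by simp [ha]⟩
    have := hmin (I \ L) hJ
    simp only [GRule.satReduct, not_forall] at this
    obtain ⟨r, hrΓ, hneg, hbody, hnohead⟩ := this
    have hbodyI : r.body ⊆ I := hbody.trans Finset.sdiff_subset
    obtain ⟨a, haH, haI⟩ := hred r hrΓ hneg hbodyI
    refine ⟨r, hrΓ, ⟨a, haH, ?_⟩, ?_, hbodyI, hneg, ?_⟩
    · by_contra haL
      exact hnohead ⟨a, haH, Finset.mem_sdiff.mpr ⟨haI, haL⟩⟩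
    · intro b hb
      have := hbody hb
      exact (Finset.mem_sdiff.mp this).2
    · intro b hbH hbL hbI
      exact hnohead ⟨b, hbH, Finset.mem_sdiff.mpr ⟨hbI, hbL⟩⟩
  · intro hLF
    constructor
    · intro r hr hneg hbody
      exact hsat r hr hbody hneg
    · intro J hJ hJsat
      have hJI : J ⊆ I := hJ.subset
      have hLne : (I \ J).Nonempty := by
        obtain ⟨a, haI, haJ⟩ := Finset.exists_of_ssubset hJ
        exact ⟨a, Finset.mem_sdiff.mpr ⟨haI, haJ⟩⟩
      obtain ⟨r, hrΓ, ⟨a, haH, haL⟩, hbL, hbI, hneg, hhead⟩ :=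
        hLF (I \ J) hLne Finset.sdiff_subset
      have hbodyJ : r.body ⊆ J := by
        intro b hb
        have hbI' := hbI hb
        have := hbL b hb
        by_contra hbJ
        exact this (Finset.mem_sdiff.mpr ⟨hbI', hbJ⟩)
      obtain ⟨c, hcH, hcJ⟩ := hJsat r hrΓ hneg hbodyJ
      have hcL : c ∉ I \ J := by simp [Finset.mem_sdiff, hcJ]
      exact hhead c hcH hcL (hJI hcJ)
end

section
/- Let P = ⟨PF, Π⟩ be a ground ProbLog program with probabilistic facts p_i :: a_i (0 < p_i < 1) whose translation P' to LP^MLN contains soft rules ln(p_i) : a_i and ln(1−p_i) : ⊥ ← a_i for each probabilistic fact, and hard rules α : R for each R ∈ Π. Then for any interpretation I whose total choice is TC(I) = {a_i : I ⊨ a_i}, the sum of the weights of the soft rules of P' satisfied by I equals ln(∏_{a_i ∈ TC(I)} p_i · ∏_{a_j ∉ TC(I)} (1 − p_j)); hence exp of that sum equals the ProbLog probability Pr_P(TC(I)) of the total choice of I. -/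
open Finset Filter Real
open scoped Classical

/-- For the LP^MLN translation of a ProbLog program, the sum of the weights of the soft
rules satisfied by I (ln p_i if a_i ∈ I, ln (1−p_i) otherwise) equals the log of the
total-choice probability of I, and its exp equals that probability. -/
theorem stmt18 {σ : Type} [DecidableEq σ] (pa : Finset σ) (pr : σ → ℝ)
    (hp : ∀ a ∈ pa, 0 < pr a ∧ pr a < 1) (I : Finset σ) :
    (∑ a ∈ pa, (if a ∈ I then Real.log (pr a) else Real.log (1 - pr a)) =
        Real.log ((∏ a ∈ pa.filter (fun a => a ∈ I), pr a) *
          ∏ a ∈ pa.filter (fun a => a ∉ I), (1 - pr a))) ∧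
      Real.exp (∑ a ∈ pa, (if a ∈ I then Real.log (pr a) else Real.log (1 - pr a))) =
        (∏ a ∈ pa.filter (fun a => a ∈ I), pr a) *
          ∏ a ∈ pa.filter (fun a => a ∉ I), (1 - pr a) := by
  have h1 : (0:ℝ) < ∏ a ∈ pa.filter (fun a => a ∈ I), pr a :=
    Finset.prod_pos fun a ha => (hp a (Finset.mem_filter.1 ha).1).1
  have h2 : (0:ℝ) < ∏ a ∈ pa.filter (fun a => a ∉ I), (1 - pr a) :=
    Finset.prod_pos fun a ha => by
      have := (hp a (Finset.mem_filter.1 ha).1).2; linarith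
  have key : (∑ a ∈ pa, (if a ∈ I then Real.log (pr a) else Real.log (1 - pr a))) =
      Real.log ((∏ a ∈ pa.filter (fun a => a ∈ I), pr a) *
        ∏ a ∈ pa.filter (fun a => a ∉ I), (1 - pr a)) := by
    rw [Real.log_mul h1.ne' h2.ne',
      Real.log_prod (fun a ha => (hp a (Finset.mem_filter.1 ha).1).1.ne'),
      Real.log_prod (fun a ha => by
        have := (hp a (Finset.mem_filter.1 ha).1).2
        intro h; linarith [h] )]
    rw [← Finset.sum_filter_add_sum_filter_not pa (fun a => a ∈ I)]
    congr 1
    · exact Finset.sum_congr rfl fun a ha => if_pos (Finset.mem_filter.1 ha).2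
    · exact Finset.sum_congr rfl fun a ha => if_neg (Finset.mem_filter.1 ha).2
  refine ⟨key, ?_⟩
  rw [key, Real.exp_log (mul_pos h1 h2)]
end
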